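/- Let X be a real normed vector space, W a finite-dimensional linear subspace of X, and (V_j)_{j ∈ ℕ} a sequence of finite-dimensional linear subspaces of X. Assume that for every strictly increasing function φ : ℕ → ℕ and every sequence (u_k) with u_k ∈ V_{φ(k)} and ‖u_k‖ = 1 for all k, there exist a strictly increasing ψ : ℕ → ℕ and an element w ∈ W such that u_{ψ(k)} → w in X. Then there exists J ∈ ℕ such that dim V_j ≤ dim W for all j ≥ J. -/

import Mathlib

open Filter

/-- A chain of unit vectors, each at distance at least `1/2` from the span of the
previous ones, in any normed space of dimension at least `m`. -/
lemma riesz_chain {E : Type*} [NormedAddCommGroup E] [NormedSpace ℝ E]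
    [FiniteDimensional ℝ E] :
    ∀ m : ℕ, m ≤ Module.finrank ℝ E →
      ∃ u : ℕ → E, (∀ i < m, ‖u i‖ = 1) ∧
        ∀ i < m, ∀ y ∈ Submodule.span ℝ (u '' {j | j < i}), (2⁻¹ : ℝ) ≤ ‖u i - y‖ := by
  classical
  intro m
  induction m with
  | zero =>
    exact fun _ => ⟨fun _ => 0, fun i hi => absurd hi (Nat.not_lt_zero i),
      fun i hi => absurd hi (Nat.not_lt_zero i)⟩
  | succ m ih =>
    intro hm
    obtain ⟨u, h1, h2⟩ := ih (by omega)
    set F : Submodule ℝ E :=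
      Submodule.span ℝ ((Finset.image u (Finset.range m) : Finset E) : Set E) with hFdef
    have hFrank : Module.finrank ℝ F ≤ m := by
      refine le_trans (finrank_span_finset_le_card _) ?_
      exact le_trans Finset.card_image_le (le_of_eq (Finset.card_range m))
    have hFne : ∃ x : E, x ∉ F := by
      by_contra hcon
      push_neg at hcon
      have hFtop : F = ⊤ := eq_top_iff.2 fun x _ => hcon x
      have : Module.finrank ℝ E ≤ m := by
        rw [← finrank_top ℝ E, ← hFtop]; exact hFrank
      omega
    obtain ⟨x₀, hx₀, hsep⟩ :=
      riesz_lemma (𝕜 := ℝ) F.closed_of_finiteDimensional hFne (r := 2⁻¹) (by norm_num)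
    have hx0 : x₀ ≠ 0 := fun h => hx₀ (h ▸ F.zero_mem)
    have hnx0 : ‖x₀‖ ≠ 0 := norm_ne_zero_iff.2 hx0
    set v : E := ‖x₀‖⁻¹ • x₀ with hvdef
    have hvnorm : ‖v‖ = 1 := by
      rw [hvdef, norm_smul, norm_inv, norm_norm, inv_mul_cancel₀ hnx0]
    have hvsep : ∀ y ∈ F, (2⁻¹ : ℝ) ≤ ‖v - y‖ := by
      intro y hy
      have h1' : v - y = ‖x₀‖⁻¹ • (x₀ - ‖x₀‖ • y) := by
        rw [smul_sub, smul_smul, inv_mul_cancel₀ hnx0, one_smul]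
      have h2' : (2⁻¹ : ℝ) * ‖x₀‖ ≤ ‖x₀ - ‖x₀‖ • y‖ := hsep _ (F.smul_mem _ hy)
      rw [h1', norm_smul, norm_inv, norm_norm]
      calc (2⁻¹ : ℝ) = ‖x₀‖⁻¹ * (2⁻¹ * ‖x₀‖) := by
            field_simp
        _ ≤ ‖x₀‖⁻¹ * ‖x₀ - ‖x₀‖ • y‖ := by
            apply mul_le_mul_of_nonneg_left h2'
            positivity
    refine ⟨Function.update u m v, ?_, ?_⟩
    · intro i hi
      rcases Nat.lt_or_ge i m with h | h
      · rw [Function.update_of_ne (by omega)]; exact h1 i h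
      · have : i = m := by omega
        subst this
        rw [Function.update_self]; exact hvnorm
    · intro i hi y hy
      have himg : ∀ i' ≤ m, Function.update u m v '' {j | j < i'} = u '' {j | j < i'} := by
        intro i' hi'
        apply Set.image_congr
        intro j hj
        have hj' : j < i' := hj
        exact Function.update_of_ne (by omega) _ _
      rcases Nat.lt_or_ge i m with h | h
      · rw [Function.update_of_ne (by omega)]
        rw [himg i (by omega)] at hy
        exact h2 i h y hy
      · have heq : i = m := by omega
        rw [heq] at hy ⊢
        rw [Function.update_self]
        apply hvsep
        rw [himg m le_rfl] at hy
        refine Submodule.span_le.2 ?_ hy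
        intro x hx
        obtain ⟨j, hj, rfl⟩ := hx
        apply Submodule.subset_span
        simp only [Finset.coe_image, Finset.coe_range, Set.mem_image, Set.mem_Iio]
        exact ⟨j, hj, rfl⟩

/-- Iterated subsequence extraction for finitely many sequences. -/
lemma extract_many {X : Type*} [NormedAddCommGroup X] [NormedSpace ℝ X]
    (W : Submodule ℝ X) (V : ℕ → Submodule ℝ X)
    (hcompact : ∀ φ : ℕ → ℕ, StrictMono φ →
      ∀ u : ℕ → X, (∀ k, u k ∈ V (φ k) ∧ ‖u k‖ = 1) →
        ∃ ψ : ℕ → ℕ, StrictMono ψ ∧ ∃ w ∈ W,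
          Tendsto (fun k => u (ψ k)) atTop (nhds w)) :
    ∀ (m : ℕ) (φ : ℕ → ℕ), StrictMono φ → ∀ u : ℕ → ℕ → X,
      (∀ k, ∀ i < m, u k i ∈ V (φ k) ∧ ‖u k i‖ = 1) →
      ∃ ψ : ℕ → ℕ, StrictMono ψ ∧ ∃ w : ℕ → X,
        ∀ i < m, w i ∈ W ∧ Tendsto (fun k => u (ψ k) i) atTop (nhds (w i)) := by
  intro m
  induction m with
  | zero =>
    exact fun φ hφ u _ => ⟨id, strictMono_id, fun _ => 0,
      fun i hi => absurd hi (Nat.not_lt_zero i)⟩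
  | succ m ih =>
    intro φ hφ u hu
    obtain ⟨ψ₀, hψ₀, w₀, hw₀, hconv₀⟩ :=
      hcompact φ hφ (fun k => u k m) (fun k => hu k m (by omega))
    obtain ⟨ψ₁, hψ₁, w, hw⟩ :=
      ih (φ ∘ ψ₀) (hφ.comp hψ₀) (fun k => u (ψ₀ k)) (fun k i hi => hu (ψ₀ k) i (by omega))
    refine ⟨ψ₀ ∘ ψ₁, hψ₀.comp hψ₁, Function.update w m w₀, ?_⟩
    intro i hi
    rcases Nat.lt_or_ge i m with h | h
    · rw [Function.update_of_ne (by omega)]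
      exact hw i h
    · have : i = m := by omega
      subst this
      rw [Function.update_self]
      exact ⟨hw₀, hconv₀.comp hψ₁.tendsto_atTop⟩

/-- If `W` and all `V_j` are finite-dimensional subspaces of a real normed space and
every sequence of unit vectors `u_k ∈ V_{φ(k)}` (for `φ` strictly increasing) has a
subsequence converging to an element of `W`, then eventually `dim V_j ≤ dim W`. -/
theorem stmt_12 {X : Type*} [NormedAddCommGroup X] [NormedSpace ℝ X]
    (W : Submodule ℝ X) (V : ℕ → Submodule ℝ X)
    [FiniteDimensional ℝ W] [∀ j, FiniteDimensional ℝ (V j)]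
    (hcompact : ∀ φ : ℕ → ℕ, StrictMono φ →
      ∀ u : ℕ → X, (∀ k, u k ∈ V (φ k) ∧ ‖u k‖ = 1) →
        ∃ ψ : ℕ → ℕ, StrictMono ψ ∧ ∃ w ∈ W,
          Tendsto (fun k => u (ψ k)) atTop (nhds w)) :
    ∃ J : ℕ, ∀ j ≥ J, Module.finrank ℝ (V j) ≤ Module.finrank ℝ W := by
  by_contra hcon
  push_neg at hcon
  set n := Module.finrank ℝ W with hn
  -- extract a strictly monotone sequence of bad indices
  obtain ⟨φ, hφ, hbad⟩ : ∃ φ : ℕ → ℕ, StrictMono φ ∧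
      ∀ k, n + 1 ≤ Module.finrank ℝ (V (φ k)) := by
    refine Nat.exists_strictMono_subsequence
      (P := fun j => n + 1 ≤ Module.finrank ℝ (V j)) ?_
    intro N
    obtain ⟨j, hj1, hj2⟩ := hcon (N + 1)
    exact ⟨j, by omega, by omega⟩
  -- in each bad space, pick a Riesz chain of n+1 separated unit vectors
  have hex : ∀ k, ∃ u : ℕ → X,
      (∀ i < n + 1, u i ∈ V (φ k) ∧ ‖u i‖ = 1) ∧
      ∀ i < n + 1, ∀ c : ℕ → ℝ,
        (2⁻¹ : ℝ) ≤ ‖u i - ∑ j ∈ Finset.range i, c j • u j‖ := by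
    intro k
    obtain ⟨u, h1, h2⟩ := riesz_chain (E := V (φ k)) (n + 1) (hbad k)
    refine ⟨fun i => (u i : X), fun i hi => ⟨(u i).2, ?_⟩, ?_⟩
    · rw [← h1 i hi]; rfl
    · intro i hi c
      have hy : (∑ j ∈ Finset.range i, c j • u j) ∈
          Submodule.span ℝ (u '' {j | j < i}) := by
        apply Submodule.sum_mem
        intro j hj
        exact Submodule.smul_mem _ _
          (Submodule.subset_span ⟨j, Finset.mem_range.1 hj, rfl⟩)
      have := h2 i hi _ hy
      calc (2⁻¹ : ℝ) ≤ ‖u i - ∑ j ∈ Finset.range i, c j • u j‖ := this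
        _ = ‖(u i : X) - ∑ j ∈ Finset.range i, c j • (u j : X)‖ := by
            rw [Submodule.coe_norm]
            congr 1
            push_cast
            ring_nf
  choose u hu1 hu2 using hex
  -- extract a simultaneous convergent subsequence
  obtain ⟨ψ, hψ, w, hw⟩ := extract_many W V hcompact (n + 1) φ hφ
    (fun k => u k) (fun k i hi => hu1 k i hi)
  -- separation passes to the limit
  have hwsep : ∀ i < n + 1, ∀ c : ℕ → ℝ,
      (2⁻¹ : ℝ) ≤ ‖w i - ∑ j ∈ Finset.range i, c j • w j‖ := by
    intro i hi c
    have hconv : Tendsto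
        (fun k => ‖u (ψ k) i - ∑ j ∈ Finset.range i, c j • u (ψ k) j‖)
        atTop (nhds ‖w i - ∑ j ∈ Finset.range i, c j • w j‖) := by
      apply Tendsto.norm
      apply Tendsto.sub ((hw i hi).2)
      apply tendsto_finset_sum
      intro j hj
      exact ((hw j (by have := Finset.mem_range.1 hj; omega)).2).const_smul (c j)
    exact ge_of_tendsto hconv (Eventually.of_forall fun k => hu2 (ψ k) i hi c)
  -- the limits give n+1 linearly independent vectors in W
  set v : Fin (n + 1) → W := fun i => ⟨w i, (hw i i.isLt).1⟩ with hvdef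
  have hindep : LinearIndependent ℝ v := by
    rw [Fintype.linearIndependent_iff]
    intro g hg
    by_contra hgne
    push_neg at hgne
    obtain ⟨i1, hi1⟩ := hgne
    -- sum is zero in X
    have hsumX : ∑ i : Fin (n + 1), g i • w (i : ℕ) = 0 := by
      have := congrArg (W.subtype) hg
      simpa [map_sum] using this
    set g' : ℕ → ℝ := fun j => if h : j < n + 1 then g ⟨j, h⟩ else 0 with hg'def
    have hg'eq : ∀ i : Fin (n + 1), g' (i : ℕ) = g i := by
      intro i; simp only [hg'def, dif_pos i.isLt]
    -- maximal index with nonzero coefficient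
    set s : Finset (Fin (n + 1)) := Finset.univ.filter (fun i => g i ≠ 0) with hsdef
    have hsne : s.Nonempty := ⟨i1, by simp [hsdef, hi1]⟩
    set i₀ : Fin (n + 1) := s.max' hsne with hi₀def
    obtain ⟨t, htdef⟩ : ∃ t : ℕ, (i₀ : ℕ) = t := ⟨_, rfl⟩
    have hg't : g' t ≠ 0 := by
      rw [← htdef, hg'eq i₀]
      exact (Finset.mem_filter.1 (s.max'_mem hsne)).2
    have hmax : ∀ j, t < j → g' j = 0 := by
      intro j hj
      by_cases hjn : j < n + 1
      · simp only [hg'def, dif_pos hjn]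
        by_contra hne
        have hmem : (⟨j, hjn⟩ : Fin (n + 1)) ∈ s := by simp [hsdef, hne]
        have hle : (⟨j, hjn⟩ : Fin (n + 1)) ≤ i₀ := s.le_max' _ hmem
        have hle' : j ≤ (i₀ : ℕ) := hle
        omega
      · simp only [hg'def, dif_neg hjn]
    -- rewrite the zero sum over ℕ
    have hsumN : ∑ j ∈ Finset.range (n + 1), g' j • w j = 0 := by
      rw [← hsumX]
      rw [← Fin.sum_univ_eq_sum_range (fun j => g' j • w j) (n + 1)]
      exact Finset.sum_congr rfl fun i _ => by rw [hg'eq]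
    have hts : ∑ j ∈ Finset.range (t + 1), g' j • w j
        = ∑ j ∈ Finset.range (n + 1), g' j • w j := by
      apply Finset.sum_subset
      · exact Finset.range_subset_range.2 (by have := i₀.isLt; omega)
      · intro j hj1 hj2
        have : t < j := by
          have h1' := Finset.mem_range.1 hj1
          have h2' : ¬ j < t + 1 := fun h => hj2 (Finset.mem_range.2 h)
          omega
        rw [hmax j this, zero_smul]
    have hsumt : ∑ j ∈ Finset.range t, g' j • w j = -(g' t • w t) := by
      have h0 := hts.trans hsumN
      rw [Finset.sum_range_succ] at h0
      linear_combination (norm := abel) h0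
    -- express w t as a combination of previous w j
    have hwt : w t - ∑ j ∈ Finset.range t, (-(g' j) / g' t) • w j = 0 := by
      have hrw : ∑ j ∈ Finset.range t, (-(g' j) / g' t) • w j
          = (-(g' t)⁻¹) • ∑ j ∈ Finset.range t, g' j • w j := by
        rw [Finset.smul_sum]
        apply Finset.sum_congr rfl
        intro j _
        rw [smul_smul]
        congr 1
        field_simp
      rw [hrw, hsumt, smul_neg, neg_smul, neg_neg, smul_smul,
        inv_mul_cancel₀ hg't, one_smul, sub_self]
    have hfin := hwsep t (by have := i₀.isLt; omega) (fun j => -(g' j) / g' t)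
    rw [hwt, norm_zero] at hfin
    norm_num at hfin
  have hcard := hindep.fintype_card_le_finrank
  simp only [Fintype.card_fin] at hcard
  omega
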